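/- Let K be a positive semidefinite bounded linear operator on H and let F = (f_1,…,f_N) be a Parseval K-frame for H which is linearly connected. Then there exists a K-dual G = (g_1,…,g_N) of F with ⟨f_i, g_i⟩ = tr(K)/N for every i; consequently, the infimum of max_{1≤i≤N} |⟨f_i, g'_i⟩| over all K-duals G' of F equals tr(K)/N and is attained. -/

import Mathlib

open scoped ComplexOrder

local notation "⟪" x ", " y "⟫" => @inner ℂ _ _ x y

set_option linter.unusedVariables false

/-- Dual functional existence for linearly independent families. -/
lemma aux_dual_exists {H : Type*} [NormedAddCommGroup H] [InnerProductSpace ℂ H]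
    [FiniteDimensional ℂ H] {M : ℕ} (w : Fin M → H) (hw : LinearIndependent ℂ w)
    (t : Fin M → ℂ) : ∃ v : H, ∀ r, ⟪v, w r⟫ = t r := by
  classical
  let Φ : H →ₗ[ℂ] EuclideanSpace ℂ (Fin M) :=
    (WithLp.linearEquiv 2 ℂ (Fin M → ℂ)).symm.toLinearMap ∘ₗ
    LinearMap.pi fun r => ((innerSL ℂ (w r)).toLinearMap)
  have hΦ : ∀ (v : H) (r : Fin M), Φ v r = ⟪w r, v⟫ := fun v r => rfl
  have hsurj : LinearMap.range Φ = ⊤ := by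
    rw [← Submodule.orthogonal_eq_bot_iff, Submodule.eq_bot_iff]
    intro y hy
    have h0 : ∀ v : H, ⟪v, ∑ r, y r • w r⟫ = 0 := by
      intro v
      have h1 := hy (Φ v) ⟨v, rfl⟩
      have h2 : @inner ℂ _ _ (Φ v) y = ∑ r, (starRingEnd ℂ) (⟪w r, v⟫) * y r := by
        rw [PiLp.inner_apply]
        exact Finset.sum_congr rfl fun r _ => by rw [hΦ, RCLike.inner_apply']
    -- ⟪v, ∑ y r • w r⟫ = ∑ y r * ⟪v, w r⟫
      rw [inner_sum]
      simp only [inner_smul_right]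
      rw [h1] at h2
      have h3 : ∀ r : Fin M, (starRingEnd ℂ) (⟪w r, v⟫) = ⟪v, w r⟫ := fun r =>
        inner_conj_symm _ _
      calc ∑ r, y r * ⟪v, w r⟫ = ∑ r, (starRingEnd ℂ) (⟪w r, v⟫) * y r := by
            refine Finset.sum_congr rfl fun r _ => ?_
            rw [h3, mul_comm]
        _ = 0 := h2.symm
    have hz : (∑ r, y r • w r) = 0 := by
      have := h0 (∑ r, y r • w r)
      rwa [inner_self_eq_zero] at this
    have hy0 := Fintype.linearIndependent_iff.mp hw (fun r => y r) hz
    ext r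
    exact hy0 r
  obtain ⟨v, hv⟩ := LinearMap.range_eq_top.mp hsurj
    ((WithLp.toLp 2 (fun r => (starRingEnd ℂ) (t r)) : EuclideanSpace ℂ (Fin M)))
  refine ⟨v, fun r => ?_⟩
  have : ⟪w r, v⟫ = (starRingEnd ℂ) (t r) := by
    rw [← hΦ v r, hv]
  rw [← inner_conj_symm, this, Complex.conj_conj]

/-- trace of a rank-one map f ↦ ⟪g, f⟫ • x -/
lemma aux_trace_rankOne {H : Type*} [NormedAddCommGroup H] [InnerProductSpace ℂ H]
    [FiniteDimensional ℂ H] (g x : H) :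
    LinearMap.trace ℂ H ((LinearMap.toSpanSingleton ℂ H x).comp
      ((innerSL ℂ g).toLinearMap)) = ⟪g, x⟫ := by
  rw [LinearMap.trace_comp_comm']
  have : ((innerSL ℂ g).toLinearMap).comp (LinearMap.toSpanSingleton ℂ H x)
      = ⟪g, x⟫ • LinearMap.id := by
    ext
    simp [LinearMap.toSpanSingleton, inner_smul_right, mul_comm]
  rw [this, map_smul, LinearMap.trace_id, smul_eq_mul]
  simp

lemma aux_trace_dual {H : Type*} [NormedAddCommGroup H] [InnerProductSpace ℂ H]
    [FiniteDimensional ℂ H] {N : ℕ} (K : H →L[ℂ] H) (F G : Fin N → H)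
    (h : ∀ f : H, K f = ∑ i, ⟪G i, f⟫ • F i) :
    LinearMap.trace ℂ H (K : H →ₗ[ℂ] H) = ∑ i, ⟪G i, F i⟫ := by
  have hK : (K : H →ₗ[ℂ] H) = ∑ i, (LinearMap.toSpanSingleton ℂ H (F i)).comp
      ((innerSL ℂ (G i)).toLinearMap) := by
    ext f
    simpa [LinearMap.toSpanSingleton] using h f
  rw [hK, map_sum]
  exact Finset.sum_congr rfl fun i _ => aux_trace_rankOne _ _

lemma aux_selfadj {H : Type*} [NormedAddCommGroup H] [InnerProductSpace ℂ H]
    [FiniteDimensional ℂ H] (K : H →L[ℂ] H) (hK : ∀ f : H, 0 ≤ ⟪K f, f⟫) :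
    ContinuousLinearMap.adjoint K = K := by
  have hpos : K.IsPositive := by
    rw [ContinuousLinearMap.isPositive_iff_complex]
    intro x
    have h := hK x
    rw [Complex.le_def] at h
    constructor
    · apply Complex.ext <;> simp [← h.2]
    · simpa using h.1
  exact ContinuousLinearMap.isSelfAdjoint_iff'.mp hpos.isSelfAdjoint

lemma aux_S_eq_Ksq {H : Type*} [NormedAddCommGroup H] [InnerProductSpace ℂ H]
    [FiniteDimensional ℂ H] {N : ℕ} (K : H →L[ℂ] H)
    (hsa : ContinuousLinearMap.adjoint K = K) (F : Fin N → H)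
    (hParseval : ∀ f : H,
      ∑ i, ‖⟪F i, f⟫‖ ^ 2 = ‖ContinuousLinearMap.adjoint K f‖ ^ 2) :
    ∀ f : H, ∑ i, ⟪F i, f⟫ • F i = K (K f) := by
  classical
  set Sl : H →ₗ[ℂ] H := ∑ i, (LinearMap.toSpanSingleton ℂ H (F i)).comp
      ((innerSL ℂ (F i)).toLinearMap) with hSl
  have hSlapp : ∀ f : H, Sl f = ∑ i, ⟪F i, f⟫ • F i := by
    intro f
    simp [hSl, LinearMap.sum_apply, LinearMap.toSpanSingleton]
  have hzero : Sl - ((K.comp K : H →L[ℂ] H) : H →ₗ[ℂ] H) = 0 := by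
    rw [← inner_map_self_eq_zero]
    intro x
    rw [LinearMap.sub_apply, inner_sub_left, hSlapp, sub_eq_zero]
    have h1 : ⟪(∑ i, ⟪F i, x⟫ • F i : H), x⟫ = ∑ i, (‖⟪F i, x⟫‖ ^ 2 : ℝ) := by
      rw [sum_inner]
      push_cast
      refine Finset.sum_congr rfl fun i _ => ?_
      rw [inner_smul_left, mul_comm, Complex.mul_conj, ← Complex.ofReal_pow,
        Complex.sq_norm]
    have h2 : ⟪(((K.comp K : H →L[ℂ] H) : H →ₗ[ℂ] H)) x, x⟫ = ((‖K x‖ : ℂ)) ^ 2 := by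
      have : (((K.comp K : H →L[ℂ] H) : H →ₗ[ℂ] H)) x = K (K x) := rfl
      rw [this]
      conv_lhs => rw [show K (K x) = ContinuousLinearMap.adjoint K (K x) by rw [hsa]]
      rw [ContinuousLinearMap.adjoint_inner_left, inner_self_eq_norm_sq_to_K]
      try rfl
    rw [h1, h2]
    have hpx := hParseval x
    rw [hsa] at hpx
    exact_mod_cast congrArg Complex.ofReal hpx
  intro f
  have h := congrArg (fun (T : H →ₗ[ℂ] H) => T f) hzero
  simp only [LinearMap.sub_apply, LinearMap.zero_apply] at h
  rw [← hSlapp f]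
  exact sub_eq_zero.mp h

lemma aux_exists_dual {H : Type*} [NormedAddCommGroup H] [InnerProductSpace ℂ H]
    [FiniteDimensional ℂ H] {N : ℕ} (K : H →L[ℂ] H)
    (hsa : ContinuousLinearMap.adjoint K = K) (F : Fin N → H)
    (hS : ∀ f : H, ∑ i, ⟪F i, f⟫ • F i = K (K f)) :
    ∃ G : Fin N → H, ∀ f : H, K f = ∑ i, ⟪G i, f⟫ • F i := by
  classical
  set Kl : H →ₗ[ℂ] H := (K : H →ₗ[ℂ] H) with hKl
  set T : (Fin N → ℂ) →ₗ[ℂ] H := ∑ i, (LinearMap.proj i).smulRight (F i) with hT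
  have hTapp : ∀ a : Fin N → ℂ, T a = ∑ i, a i • F i := by
    intro a; simp [hT, LinearMap.sum_apply]
  have hkerle : LinearMap.ker (Kl ∘ₗ Kl) ≤ LinearMap.ker Kl := by
    intro x hx
    have hx' : K (K x) = 0 := hx
    have : ⟪K x, K x⟫ = 0 := by
      have h1 : ⟪K (K x), x⟫ = ⟪K x, K x⟫ := by
        conv_lhs => rw [show K (K x) = ContinuousLinearMap.adjoint K (K x) by rw [hsa]]
        rw [ContinuousLinearMap.adjoint_inner_left]
      rw [← h1, hx', inner_zero_left]
    have : K x = 0 := inner_self_eq_zero.mp this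
    exact this
  have hrangeeq : LinearMap.range (Kl ∘ₗ Kl) = LinearMap.range Kl := by
    have hle : LinearMap.range (Kl ∘ₗ Kl) ≤ LinearMap.range Kl := by
      rintro _ ⟨x, rfl⟩; exact ⟨Kl x, rfl⟩
    have h1 := LinearMap.finrank_range_add_finrank_ker (Kl ∘ₗ Kl)
    have h2 := LinearMap.finrank_range_add_finrank_ker Kl
    have hkerge : LinearMap.ker Kl ≤ LinearMap.ker (Kl ∘ₗ Kl) := by
      intro x hx
      have hx' : Kl x = 0 := hx
      show Kl (Kl x) = 0
      rw [hx', map_zero]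
    have hkereq : LinearMap.ker (Kl ∘ₗ Kl) = LinearMap.ker Kl :=
      le_antisymm hkerle hkerge
    have : Module.finrank ℂ (LinearMap.range Kl)
        ≤ Module.finrank ℂ (LinearMap.range (Kl ∘ₗ Kl)) := by
      rw [hkereq] at h1; omega
    exact Submodule.eq_of_le_of_finrank_le hle this
  have hrange : ∀ f : H, K f ∈ LinearMap.range T := by
    intro f
    have : Kl f ∈ LinearMap.range (Kl ∘ₗ Kl) := by
      rw [hrangeeq]; exact ⟨f, rfl⟩
    obtain ⟨g, hg⟩ := this
    refine ⟨fun i => ⟪F i, g⟫, ?_⟩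
    rw [hTapp, hS g]
    exact hg
  obtain ⟨R, hR⟩ := T.rangeRestrict.exists_rightInverse_of_surjective
    (LinearMap.range_eq_top.mpr T.surjective_rangeRestrict)
  set K' : H →ₗ[ℂ] LinearMap.range T := Kl.codRestrict (LinearMap.range T) hrange with hK'
  set B : H →ₗ[ℂ] (Fin N → ℂ) := R ∘ₗ K' with hB
  have hTB : ∀ f : H, T (B f) = K f := by
    intro f
    have h1 : T.rangeRestrict (R (K' f)) = K' f := by
      have := congrArg (fun (S : LinearMap.range T →ₗ[ℂ] LinearMap.range T) => S (K' f)) hR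
      exact this
    have h2 : (T.rangeRestrict (R (K' f)) : H) = T (R (K' f)) := rfl
    rw [hB]
    show T (R (K' f)) = K f
    rw [← h2, h1]
    rfl
  refine ⟨fun i => (InnerProductSpace.toDual ℂ H).symm
    (LinearMap.toContinuousLinearMap ((LinearMap.proj i) ∘ₗ B)), fun f => ?_⟩
  have hG : ∀ i, ⟪(InnerProductSpace.toDual ℂ H).symm
      (LinearMap.toContinuousLinearMap ((LinearMap.proj i) ∘ₗ B)), f⟫ = B f i := by
    intro i
    rw [InnerProductSpace.toDual_symm_apply]
    rfl
  calc K f = T (B f) := (hTB f).symm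
    _ = ∑ i, B f i • F i := hTapp _
    _ = _ := by
      refine Finset.sum_congr rfl fun i _ => ?_
      rw [hG i]

lemma aux_null {H : Type*} [NormedAddCommGroup H] [InnerProductSpace ℂ H]
    [FiniteDimensional ℂ H] {N : ℕ} (F : Fin N → H) (j z : Fin N) (hj : j ≠ z)
    {m : ℕ} (ℓ : Fin m → Fin N) (c : ℂ) (d : Fin m → ℂ) (hc : c ≠ 0)
    (hrel : F j = c • F z + ∑ k, d k • F (ℓ k))
    (hind : LinearIndependent ℂ (Fin.cons (F z) (fun k => F (ℓ k)) : Fin (m + 1) → H))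
    (t : ℂ) :
    ∃ v : Fin N → H, (∀ f : H, ∑ p, ⟪v p, f⟫ • F p = 0) ∧
      (∀ p, ⟪v p, F p⟫ = (if p = j then t else 0) - (if p = z then t else 0)) := by
  classical
  set w : Fin (m + 1) → H := Fin.cons (F z) (fun k => F (ℓ k)) with hw
  obtain ⟨v₀, hv₀⟩ := aux_dual_exists w hind (Fin.cons (t / c) 0)
  have hvz : ⟪v₀, F z⟫ = t / c := by simpa [hw] using hv₀ 0
  have hvℓ : ∀ k, ⟪v₀, F (ℓ k)⟫ = 0 := by
    intro k
    simpa [hw] using hv₀ k.succ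
  have hℓz : ∀ k, ℓ k ≠ z := by
    intro k hk
    have : w k.succ = w 0 := by simp [hw, hk]
    have := hind.injective this
    exact (Fin.succ_ne_zero k) this
  have hℓj : ∀ k, ℓ k ≠ j := by
    intro k hk
    have hzero : ∑ r, (Fin.cons c (fun k' => d k' - if k' = k then 1 else 0) :
        Fin (m+1) → ℂ) r • w r = 0 := by
      rw [Fin.sum_univ_succ]
      simp only [Fin.cons_zero, Fin.cons_succ]
      have : ∑ k', (d k' - if k' = k then 1 else 0) • w k'.succ
          = (∑ k', d k' • F (ℓ k')) - F (ℓ k) := by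
        simp [hw, sub_smul, Finset.sum_sub_distrib, ite_smul, one_smul, zero_smul,
          Finset.sum_ite_eq']
      rw [this]
      have hwk : F (ℓ k) = F j := by rw [hk]
      simp [hw, hwk, hrel]
      try abel
    have := Fintype.linearIndependent_iff.mp hind _ hzero 0
    simp at this
    exact hc this
  have hvj : ⟪v₀, F j⟫ = t := by
    rw [hrel, inner_add_right, inner_smul_right, inner_sum]
    simp only [inner_smul_right, hvℓ, mul_zero, Finset.sum_const_zero, add_zero]
    rw [hvz]
    field_simp
  set a : Fin N → ℂ := fun p => (if p = j then 1 else 0) - (if p = z then c else 0)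
      - ∑ k, (if p = ℓ k then d k else 0) with ha
  refine ⟨fun p => (starRingEnd ℂ) (a p) • v₀, ?_, ?_⟩
  · intro f
    have hip : ∀ p, ⟪(starRingEnd ℂ) (a p) • v₀, f⟫ = a p * ⟪v₀, f⟫ := by
      intro p; rw [inner_smul_left, Complex.conj_conj]
    simp only [hip]
    have : ∀ p : Fin N, (a p * ⟪v₀, f⟫) • F p = ⟪v₀, f⟫ • (a p • F p) := by
      intro p; rw [mul_comm, ← smul_smul]
    simp only [this]
    rw [← Finset.smul_sum]
    have hasum : ∑ p, a p • F p = 0 := by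
      simp only [ha, sub_smul, Finset.sum_sub_distrib, ite_smul, one_smul, zero_smul,
        Finset.sum_ite_eq', Finset.mem_univ, if_true, Finset.sum_smul]
      have h3 : ∑ p : Fin N, ∑ k, (if p = ℓ k then d k • F p else 0)
          = ∑ k, d k • F (ℓ k) := by
        rw [Finset.sum_comm]
        refine Finset.sum_congr rfl fun k _ => ?_
        rw [Finset.sum_ite_eq' Finset.univ (ℓ k) (fun p => d k • F p)]
        simp
      rw [h3, hrel]
      abel
    rw [hasum, smul_zero]
  · intro p
    have hip : ⟪(starRingEnd ℂ) (a p) • v₀, F p⟫ = a p * ⟪v₀, F p⟫ := by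
      rw [inner_smul_left, Complex.conj_conj]
    rw [hip]
    by_cases hpj : p = j
    · subst hpj
      have h4 : ∑ k, (if p = ℓ k then d k else 0) = 0 :=
        Finset.sum_eq_zero fun k _ => if_neg fun h => hℓj k h.symm
      have haj : a p = 1 := by simp [ha, hj, h4]
      simp [haj, hvj, hj]
    · by_cases hpz : p = z
      · subst hpz
        have h4 : ∑ k, (if p = ℓ k then d k else 0) = 0 :=
          Finset.sum_eq_zero fun k _ => if_neg fun h => hℓz k h.symm
        have haz : a p = -c := by simp [ha, hpj, h4]
        rw [haz, hvz]
        have h5 : (if p = j then t else 0) - (if p = p then t else 0) = -t := by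
          simp [hpj]
        rw [h5]
        field_simp
      · rw [if_neg hpj, if_neg hpz, sub_zero]
        by_cases hex : ∃ k, p = ℓ k
        · obtain ⟨k, rfl⟩ := hex
          rw [hvℓ k, mul_zero]
        · have hap : a p = 0 := by
            simp only [ha]
            rw [if_neg hpj, if_neg hpz]
            have : ∑ k, (if p = ℓ k then d k else 0) = 0 := by
              refine Finset.sum_eq_zero fun k _ => ?_
              rw [if_neg fun h => hex ⟨k, h⟩]
            rw [this]; ring
          rw [hap, zero_mul]

/-- Let `K` be positive semidefinite and `F` a linearly connected Parseval
`K`-frame.  Then there is a `K`-dual `G` of `F` with `⟨f_i, g_i⟩ = tr(K)/N` for all `i`;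
consequently the infimum of `max_i |⟨f_i, g'_i⟩|` over all `K`-duals `G'` of `F` equals
`tr(K)/N` and is attained.
(The paper's `⟨f, g⟩` is linear in the first slot, i.e. Mathlib's `⟪g, f⟫`; a pair `f_i, f_j`
(`i ≠ j`) is linearly `F`-connected when `f_i = c f_j + ∑_k c_k f_{ℓ_k}` with all scalars
nonzero and `{f_j, f_{ℓ_1}, …, f_{ℓ_m}}` linearly independent.) -/
theorem stmt15
    {H : Type*} [NormedAddCommGroup H] [InnerProductSpace ℂ H] [FiniteDimensional ℂ H]
    (hdim : 1 ≤ Module.finrank ℂ H)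
    {N : ℕ} (hN : 1 ≤ N)
    (K : H →L[ℂ] H) (hK : ∀ f : H, 0 ≤ ⟪K f, f⟫)
    (F : Fin N → H)
    (hParseval : ∀ f : H,
      ∑ i, ‖⟪F i, f⟫‖ ^ 2 = ‖ContinuousLinearMap.adjoint K f‖ ^ 2)
    (hconn : ∀ i j : Fin N, i ≠ j →
      ∃ (m : ℕ) (ℓ : Fin m → Fin N) (c : ℂ) (d : Fin m → ℂ),
        c ≠ 0 ∧ (∀ k, d k ≠ 0) ∧
        F i = c • F j + ∑ k, d k • F (ℓ k) ∧
        LinearIndependent ℂ (Fin.cons (F j) (fun k => F (ℓ k)) : Fin (m + 1) → H)) :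
    ∃ G : Fin N → H,
      (∀ f : H, K f = ∑ i, ⟪G i, f⟫ • F i) ∧
      (∀ i, ⟪G i, F i⟫ = LinearMap.trace ℂ H (K : H →ₗ[ℂ] H) / N) ∧
      (⨆ i, ‖⟪G i, F i⟫‖) = (LinearMap.trace ℂ H (K : H →ₗ[ℂ] H)).re / N ∧
      (∀ G' : Fin N → H, (∀ f : H, K f = ∑ i, ⟪G' i, f⟫ • F i) →
        (LinearMap.trace ℂ H (K : H →ₗ[ℂ] H)).re / N ≤ ⨆ i, ‖⟪G' i, F i⟫‖) := by
  classical
  have hNpos : 0 < N := hN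
  set tr : ℂ := LinearMap.trace ℂ H (K : H →ₗ[ℂ] H) with htr
  have hsa := aux_selfadj K hK
  have hS := aux_S_eq_Ksq K hsa F hParseval
  obtain ⟨G₀, hG₀⟩ := aux_exists_dual K hsa F hS
  set z : Fin N := ⟨0, hNpos⟩ with hz
  set τ : ℂ := tr / N with hτ
  have hNC : (N : ℂ) ≠ 0 := Nat.cast_ne_zero.mpr hNpos.ne'
  have hNτ : (N : ℂ) * τ = tr := by
    rw [hτ]; field_simp
  set d0 : Fin N → ℂ := fun i => ⟪G₀ i, F i⟫ with hd0
  have hsum0 : ∑ i, d0 i = tr := (aux_trace_dual K F G₀ hG₀).symm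
  set e : Fin N → ℂ := fun j => if j = z then 0 else τ - d0 j with he
  have hkey : ∀ j : Fin N, ∃ v : Fin N → H, (∀ f : H, ∑ p, ⟪v p, f⟫ • F p = 0) ∧
      (∀ p, ⟪v p, F p⟫ = (if p = j then e j else 0) - (if p = z then e j else 0)) := by
    intro j
    by_cases hjz : j = z
    · refine ⟨fun _ => 0, by simp, fun p => ?_⟩
      have : e j = 0 := by simp [he, hjz]
      simp [this]
    · obtain ⟨m, ℓ, c, d, hc, hd, hrel, hind⟩ := hconn j z hjz
      exact aux_null F j z hjz ℓ c d hc hrel hind (e j)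
  choose v hv1 hv2 using hkey
  set G : Fin N → H := fun i => G₀ i + ∑ j, v j i with hG
  have hdual : ∀ f : H, K f = ∑ i, ⟪G i, f⟫ • F i := by
    intro f
    have expand : ∀ i, ⟪G i, f⟫ • F i = ⟪G₀ i, f⟫ • F i + ∑ j, ⟪v j i, f⟫ • F i := by
      intro i
      rw [hG]
      simp only [inner_add_left, sum_inner, add_smul, Finset.sum_smul]
    simp only [expand]
    rw [Finset.sum_add_distrib, ← hG₀ f]
    have : ∑ i, ∑ j, ⟪v j i, f⟫ • F i = 0 := by
      rw [Finset.sum_comm]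
      simp [hv1]
    rw [this, add_zero]
  have hdiag : ∀ i, ⟪G i, F i⟫ = τ := by
    intro i
    have expand : ⟪G i, F i⟫ = d0 i + ∑ j, ⟪v j i, F i⟫ := by
      rw [hG]; simp only [inner_add_left, sum_inner, hd0]
    rw [expand]
    have hes : ∀ j, ⟪v j i, F i⟫ = (if i = j then e j else 0) - (if i = z then e j else 0) :=
      fun j => hv2 j i
    simp only [hes, Finset.sum_sub_distrib]
    have h1 : ∑ j, (if i = j then e j else 0) = e i := by
      rw [Finset.sum_ite_eq Finset.univ i e]; simp
    have hE : ∑ j, e j = d0 z - τ := by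
      have : ∀ j, e j = (τ - d0 j) - (if j = z then τ - d0 z else 0) := by
        intro j
        by_cases hjz : j = z <;> simp [he, hjz]
      simp only [this, Finset.sum_sub_distrib, Finset.sum_ite_eq' Finset.univ z]
      simp only [Finset.mem_univ, if_true, Finset.sum_sub_distrib, Finset.sum_const,
        Finset.card_univ, Fintype.card_fin, nsmul_eq_mul, hsum0, hNτ]
      ring
    rw [h1]
    have h2 : ∑ x : Fin N, (if i = z then e x else 0) = if i = z then d0 z - τ else 0 := by
      by_cases hiz : i = z
      · simp [hiz, hE]
      · simp [hiz]
    rw [h2]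
    by_cases hiz : i = z
    · rw [if_pos hiz]
      have he0 : e i = 0 := by simp [he, hiz]
      rw [he0, hiz]
      ring
    · rw [if_neg hiz]
      have he1 : e i = τ - d0 i := by simp [he, hiz]
      rw [he1]
      ring
  -- trace is a nonnegative real
  have h0tr : 0 ≤ tr := by
    set b := stdOrthonormalBasis ℂ H with hb
    have htr2 : tr = ∑ j, ⟪b j, K (b j)⟫ := by
      rw [htr, LinearMap.trace_eq_matrix_trace ℂ b.toBasis, Matrix.trace]
      refine Finset.sum_congr rfl fun j _ => ?_
      rw [Matrix.diag_apply, LinearMap.toMatrix_apply, OrthonormalBasis.coe_toBasis,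
        OrthonormalBasis.coe_toBasis_repr_apply, OrthonormalBasis.repr_apply_apply]
      rfl
    rw [htr2]
    refine Finset.sum_nonneg fun j _ => ?_
    have h := hK (b j)
    have him : (⟪K (b j), b j⟫).im = 0 := by
      rw [Complex.le_def] at h
      simpa using h.2.symm
    have hconj : ⟪b j, K (b j)⟫ = ⟪K (b j), b j⟫ := by
      rw [← inner_conj_symm, Complex.conj_eq_iff_im]
      exact him
    rw [hconj]
    exact h
  have htr_re : (tr.re : ℂ) = tr := by
    rw [Complex.le_def] at h0tr
    apply Complex.ext <;> simp [← h0tr.2]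
  have htr_re_nonneg : 0 ≤ tr.re := by
    rw [Complex.le_def] at h0tr
    simpa using h0tr.1
  have habsτ : ‖τ‖ = tr.re / N := by
    rw [hτ, norm_div, Complex.norm_natCast]
    congr 1
    conv_lhs => rw [← htr_re]
    rw [Complex.norm_real, Real.norm_of_nonneg htr_re_nonneg]
  refine ⟨G, hdual, fun i => by rw [hdiag i, hτ], ?_, ?_⟩
  · have : ∀ i, ‖⟪G i, F i⟫‖ = tr.re / N := by
      intro i; rw [hdiag i, habsτ]
    simp only [this]
    haveI : Nonempty (Fin N) := ⟨z⟩
    exact ciSup_const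
  · intro G' hG'
    set S := ⨆ i, ‖⟪G' i, F i⟫‖ with hSdef
    have hbdd : BddAbove (Set.range fun i => ‖⟪G' i, F i⟫‖) :=
      Set.Finite.bddAbove (Set.finite_range _)
    have hle : ∀ i, ‖⟪G' i, F i⟫‖ ≤ S := fun i => le_ciSup hbdd i
    have hsum' : tr = ∑ i, ⟪G' i, F i⟫ := aux_trace_dual K F G' hG'
    have h1 : tr.re = ∑ i, (⟪G' i, F i⟫).re := by
      rw [hsum', Complex.re_sum]
    have h2 : tr.re ≤ (N : ℝ) * S := by
      rw [h1]
      calc ∑ i, (⟪G' i, F i⟫).re ≤ ∑ i, ‖⟪G' i, F i⟫‖ :=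
            Finset.sum_le_sum fun i _ => Complex.re_le_norm _
        _ ≤ ∑ _i : Fin N, S := Finset.sum_le_sum fun i _ => hle i
        _ = (N : ℝ) * S := by
            rw [Finset.sum_const, Finset.card_univ, Fintype.card_fin, nsmul_eq_mul]
    rw [div_le_iff₀ (by positivity : (0:ℝ) < (N:ℝ))]
    linarith
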